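/- Let β be a Hermitian matrix on ℂ^{n+1} with largest eigenvalue c_r attained on eigenspace V_r, and f([z]) = ⟨βz,z⟩/|z|² the Rayleigh quotient on ℙⁿ(ℂ). Then the unstable set {[z] : lim_{t→+∞} f([exp(tβ)z]) = c_r} equals the complement of the linear subspace ℙ(V₀ ⊕ … ⊕ V_{r-1}), and in particular is open and dense in ℙⁿ(ℂ). -/

import Mathlib

open Filter

lemma exp_apply_eigen {E : Type*} [NormedAddCommGroup E] [NormedSpace ℂ E] [CompleteSpace E]
    (A : E →L[ℂ] E) (a : ℂ) (z : E) (h : A z = a • z) :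
    NormedSpace.exp A z = Complex.exp a • z := by
  have hpow : ∀ k : ℕ, (A ^ k) z = a ^ k • z := by
    intro k
    induction k with
    | zero => simp
    | succ k ih =>
      rw [pow_succ, ContinuousLinearMap.mul_apply, h, map_smul, ih, smul_smul, pow_succ,
        mul_comm]
  have hs : Summable (fun k : ℕ => ((Nat.factorial k : ℂ))⁻¹ • A ^ k) :=
    NormedSpace.expSeries_summable' (𝕂 := ℂ) A
  have hsa : Summable (fun k : ℕ => ((Nat.factorial k : ℂ))⁻¹ • a ^ k) :=
    NormedSpace.expSeries_summable' (𝕂 := ℂ) a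
  have h1 : NormedSpace.exp A z = ∑' k : ℕ, (((Nat.factorial k : ℂ))⁻¹ • A ^ k) z := by
    rw [NormedSpace.exp_eq_tsum (𝕂 := ℂ)]
    exact (ContinuousLinearMap.apply ℂ E z).map_tsum hs
  rw [h1]
  have h2 : ∀ k : ℕ, (((Nat.factorial k : ℂ))⁻¹ • A ^ k) z
      = (((Nat.factorial k : ℂ))⁻¹ • a ^ k) • z := by
    intro k
    simp [hpow k, smul_smul]
  rw [tsum_congr h2, hsa.tsum_smul_const, Complex.exp_eq_exp_ℂ, NormedSpace.exp_eq_tsum (𝕂 := ℂ)]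

section aux

variable {m : ℕ}

local notation "E" => EuclideanSpace ℂ (Fin m)

lemma eigen_orth (β : E →L[ℂ] E)
    (hherm : ∀ z w : E, (inner ℂ (β z) w : ℂ) = inner ℂ z (β w))
    {a b : ℝ} (hab : a ≠ b) {x y : E}
    (hx : β x = (a : ℂ) • x) (hy : β y = (b : ℂ) • y) : (inner ℂ x y : ℂ) = 0 := by
  have h1 := hherm x y
  rw [hx, hy, inner_smul_left, inner_smul_right, Complex.conj_ofReal] at h1
  have h2 : ((a : ℂ) - b) * inner ℂ x y = 0 := by rw [sub_mul, h1]; ring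
  rcases mul_eq_zero.mp h2 with h | h
  · exact absurd (by exact_mod_cast sub_eq_zero.mp h) hab
  · exact h

end aux

set_option maxHeartbeats 1000000 in
theorem stmt_16 {n r : ℕ}
    (β : EuclideanSpace ℂ (Fin (n + 1)) →L[ℂ] EuclideanSpace ℂ (Fin (n + 1)))
    (hherm : ∀ z w : EuclideanSpace ℂ (Fin (n + 1)),
      (inner ℂ (β z) w : ℂ) = inner ℂ z (β w))
    (c : Fin (r + 1) → ℝ) (hmono : StrictMono c)
    (V : Fin (r + 1) → Submodule ℂ (EuclideanSpace ℂ (Fin (n + 1))))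
    (hV : ∀ i, ∀ z ∈ V i, β z = (c i : ℂ) • z)
    (hspan : (⨆ i, V i) = ⊤) (hVr : V (Fin.last r) ≠ ⊥)
    (f : EuclideanSpace ℂ (Fin (n + 1)) → ℝ)
    (hf : ∀ z, f z = (inner ℂ (β z) z : ℂ).re / ‖z‖ ^ 2)
    (W : Submodule ℂ (EuclideanSpace ℂ (Fin (n + 1))))
    (hW : W = ⨆ i : Fin r, V i.castSucc) :
    {z : EuclideanSpace ℂ (Fin (n + 1)) | z ≠ 0 ∧
        Tendsto (fun t : ℝ => f (NormedSpace.exp ((t : ℂ) • β) z)) atTop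
          (nhds (c (Fin.last r)))} =
      {z : EuclideanSpace ℂ (Fin (n + 1)) | z ≠ 0 ∧ z ∉ W} ∧
    IsOpen ((W : Set (EuclideanSpace ℂ (Fin (n + 1))))ᶜ) ∧
    Dense ((W : Set (EuclideanSpace ℂ (Fin (n + 1))))ᶜ) := by
  set L := Fin.last r with hL
  -- orthogonality of eigenvectors in distinct eigenspaces
  have horth : ∀ i j : Fin (r + 1), i ≠ j →
      ∀ x ∈ V i, ∀ y ∈ V j, (inner ℂ x y : ℂ) = 0 := by
    intro i j hij x hx y hy
    exact eigen_orth β hherm (fun h => hij (hmono.injective h)) (hV i x hx) (hV j y hy)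
  -- diagonal inner products
  have hdiag : ∀ (p q : Fin (r + 1) → EuclideanSpace ℂ (Fin (n + 1))),
      (∀ i, p i ∈ V i) → (∀ i, q i ∈ V i) →
      (inner ℂ (∑ i, p i) (∑ i, q i) : ℂ) = ∑ i, (inner ℂ (p i) (q i) : ℂ) := by
    intro p q hp hq
    rw [sum_inner]
    refine Finset.sum_congr rfl fun i _ => ?_
    rw [inner_sum, Finset.sum_eq_single i
      (fun j _ hj => horth i j (Ne.symm hj) (p i) (hp i) (q j) (hq j))
      (fun hi => absurd (Finset.mem_univ i) hi)]
  -- main formula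
  have main : ∀ (g : Fin (r + 1) → EuclideanSpace ℂ (Fin (n + 1))), (∀ i, g i ∈ V i) →
      ∀ t : ℝ, f (NormedSpace.exp ((t : ℂ) • β) (∑ i, g i)) =
        (∑ i, c i * ((Real.exp (t * c i)) ^ 2 * ‖g i‖ ^ 2)) /
        (∑ i, (Real.exp (t * c i)) ^ 2 * ‖g i‖ ^ 2) := by
    intro g hg t
    set v : Fin (r + 1) → EuclideanSpace ℂ (Fin (n + 1)) :=
      fun i => ((Real.exp (t * c i) : ℝ) : ℂ) • g i with hv_def
    have hv : ∀ i, v i ∈ V i := fun i => Submodule.smul_mem _ _ (hg i)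
    have hnorm_v : ∀ i, ‖v i‖ ^ 2 = (Real.exp (t * c i)) ^ 2 * ‖g i‖ ^ 2 := by
      intro i
      rw [hv_def]
      simp only [norm_smul, Complex.norm_real, Real.norm_eq_abs, Real.abs_exp, mul_pow]
    have hexp : NormedSpace.exp ((t : ℂ) • β) (∑ i, g i) = ∑ i, v i := by
      rw [map_sum]
      refine Finset.sum_congr rfl fun i _ => ?_
      have heig : ((t : ℂ) • β) (g i) = ((t : ℂ) * (c i : ℂ)) • g i := by
        rw [ContinuousLinearMap.smul_apply, hV i (g i) (hg i), smul_smul]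
      rw [exp_apply_eigen _ _ _ heig, hv_def]
      norm_cast
    have hbeta : β (∑ i, v i) = ∑ i, (c i : ℂ) • v i := by
      rw [map_sum]
      exact Finset.sum_congr rfl fun i _ => hV i (v i) (hv i)
    have hself : ∀ x : EuclideanSpace ℂ (Fin (n + 1)), (inner ℂ x x : ℂ).re = ‖x‖ ^ 2 :=
      fun x => by simpa using inner_self_eq_norm_sq (𝕜 := ℂ) x
    have hnum : (inner ℂ (β (∑ i, v i)) (∑ i, v i) : ℂ).re
        = ∑ i, c i * ‖v i‖ ^ 2 := by
      rw [hbeta, hdiag (fun i => (c i : ℂ) • v i) v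
        (fun i => Submodule.smul_mem _ _ (hv i)) hv, Complex.re_sum]
      refine Finset.sum_congr rfl fun i _ => ?_
      rw [inner_smul_left, Complex.conj_ofReal, Complex.re_ofReal_mul, hself]
    have hden' : ‖∑ i, v i‖ ^ 2 = ∑ i, ‖v i‖ ^ 2 := by
      rw [← hself, hdiag v v hv hv, Complex.re_sum]
      exact Finset.sum_congr rfl fun i _ => hself (v i)
    rw [hf, hexp, hnum, hden']
    congr 1
    · exact Finset.sum_congr rfl fun i _ => by rw [hnorm_v]
    · exact Finset.sum_congr rfl fun i _ => by rw [hnorm_v]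
  -- denominator positivity
  have hDpos : ∀ (g : Fin (r + 1) → EuclideanSpace ℂ (Fin (n + 1))) (k : Fin (r + 1)),
      g k ≠ 0 → ∀ t : ℝ, 0 < ∑ i, (Real.exp (t * c i)) ^ 2 * ‖g i‖ ^ 2 := by
    intro g k hk t
    refine Finset.sum_pos' (fun i _ => by positivity) ⟨k, Finset.mem_univ k, ?_⟩
    have : 0 < ‖g k‖ := norm_pos_iff.mpr hk
    positivity
  -- decomposition
  have decomp : ∀ z : EuclideanSpace ℂ (Fin (n + 1)),
      ∃ g : Fin (r + 1) → EuclideanSpace ℂ (Fin (n + 1)),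
        (∀ i, g i ∈ V i) ∧ ∑ i, g i = z := by
    intro z
    have hz : z ∈ ⨆ i, V i := hspan ▸ Submodule.mem_top
    rw [Submodule.mem_iSup_iff_exists_finsupp] at hz
    obtain ⟨gf, hg1, hg2⟩ := hz
    refine ⟨gf, hg1, ?_⟩
    rw [Finsupp.sum_fintype _ _ (fun i => rfl)] at hg2
    exact hg2
  have decompW : ∀ z ∈ W, ∃ g : Fin r → EuclideanSpace ℂ (Fin (n + 1)),
      (∀ i, g i ∈ V i.castSucc) ∧ ∑ i, g i = z := by
    intro z hz
    rw [hW, Submodule.mem_iSup_iff_exists_finsupp] at hz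
    obtain ⟨gf, hg1, hg2⟩ := hz
    refine ⟨gf, hg1, ?_⟩
    rw [Finsupp.sum_fintype _ _ (fun i => rfl)] at hg2
    exact hg2
  -- tendsto when top component nonzero
  have key : ∀ (g : Fin (r + 1) → EuclideanSpace ℂ (Fin (n + 1))), (∀ i, g i ∈ V i) →
      g L ≠ 0 →
      Tendsto (fun t : ℝ => f (NormedSpace.exp ((t : ℂ) • β) (∑ i, g i))) atTop
        (nhds (c L)) := by
    intro g hg hgL
    have hAL : 0 < ‖g L‖ ^ 2 := by
      have : 0 < ‖g L‖ := norm_pos_iff.mpr hgL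
      positivity
    have heq : ∀ t : ℝ, f (NormedSpace.exp ((t : ℂ) • β) (∑ i, g i)) =
        (∑ i, c i * ((Real.exp (t * (c i - c L))) ^ 2 * ‖g i‖ ^ 2)) /
        (∑ i, (Real.exp (t * (c i - c L))) ^ 2 * ‖g i‖ ^ 2) := by
      intro t
      rw [main g hg t]
      have hEL : ((Real.exp (t * c L)) ^ 2) ≠ 0 := by positivity
      have hfac : ∀ i : Fin (r + 1),
          Real.exp (t * c i) = Real.exp (t * (c i - c L)) * Real.exp (t * c L) := by
        intro i
        rw [← Real.exp_add]
        congr 1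
        ring
      have hN : ∑ i, c i * ((Real.exp (t * c i)) ^ 2 * ‖g i‖ ^ 2)
          = (∑ i, c i * ((Real.exp (t * (c i - c L))) ^ 2 * ‖g i‖ ^ 2))
            * (Real.exp (t * c L)) ^ 2 := by
        rw [Finset.sum_mul]
        refine Finset.sum_congr rfl fun i _ => ?_
        rw [hfac i]
        ring
      have hD : ∑ i, (Real.exp (t * c i)) ^ 2 * ‖g i‖ ^ 2
          = (∑ i, (Real.exp (t * (c i - c L))) ^ 2 * ‖g i‖ ^ 2)
            * (Real.exp (t * c L)) ^ 2 := by
        rw [Finset.sum_mul]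
        refine Finset.sum_congr rfl fun i _ => ?_
        rw [hfac i]
        ring
      rw [hN, hD, mul_div_mul_right _ _ hEL]
    simp only [heq]
    have hnum_t : Tendsto (fun t : ℝ =>
        ∑ i, c i * ((Real.exp (t * (c i - c L))) ^ 2 * ‖g i‖ ^ 2)) atTop
        (nhds (c L * ‖g L‖ ^ 2)) := by
      have : (c L * ‖g L‖ ^ 2) = ∑ i, (if i = L then c i * ‖g i‖ ^ 2 else 0) := by
        rw [Finset.sum_ite_eq' Finset.univ L (fun i => c i * ‖g i‖ ^ 2)]
        simp
      rw [this]
      refine tendsto_finset_sum _ fun i _ => ?_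
      by_cases hi : i = L
      · subst hi
        simp
      · have hlt : c i - c L < 0 := by
          have : i < L := lt_of_le_of_ne (Fin.le_last i) hi
          linarith [hmono this]
        have h0 : Tendsto (fun t : ℝ => Real.exp (t * (c i - c L))) atTop (nhds 0) :=
          Real.tendsto_exp_atBot.comp (tendsto_id.atTop_mul_const_of_neg hlt)
        have := ((h0.pow 2).mul_const (‖g i‖ ^ 2)).const_mul (c i)
        simpa [hi] using this
    have hden_t : Tendsto (fun t : ℝ =>
        ∑ i, (Real.exp (t * (c i - c L))) ^ 2 * ‖g i‖ ^ 2) atTop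
        (nhds (‖g L‖ ^ 2)) := by
      have : (‖g L‖ ^ 2) = ∑ i, (if i = L then ‖g i‖ ^ 2 else 0) := by
        rw [Finset.sum_ite_eq' Finset.univ L (fun i => ‖g i‖ ^ 2)]
        simp
      rw [this]
      refine tendsto_finset_sum _ fun i _ => ?_
      by_cases hi : i = L
      · subst hi
        simp
      · have hlt : c i - c L < 0 := by
          have : i < L := lt_of_le_of_ne (Fin.le_last i) hi
          linarith [hmono this]
        have h0 : Tendsto (fun t : ℝ => Real.exp (t * (c i - c L))) atTop (nhds 0) :=
          Real.tendsto_exp_atBot.comp (tendsto_id.atTop_mul_const_of_neg hlt)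
        have := (h0.pow 2).mul_const (‖g i‖ ^ 2)
        simpa [hi] using this
    have := hnum_t.div hden_t (ne_of_gt hAL)
    rwa [mul_div_assoc, div_self (ne_of_gt hAL), mul_one] at this
  -- bound on W
  have hbound : ∀ z ∈ W, z ≠ 0 →
      ¬ Tendsto (fun t : ℝ => f (NormedSpace.exp ((t : ℂ) • β) z)) atTop (nhds (c L)) := by
    intro z hzW hz0 htend
    obtain ⟨g', hg'1, hg'2⟩ := decompW z hzW
    rcases Nat.eq_zero_or_pos r with hr | hr
    · subst hr
      exact hz0 (by rw [← hg'2]; simp)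
    set j : Fin (r + 1) := ⟨r - 1, by omega⟩ with hj
    have hjL : j < L := by
      rw [Fin.lt_def]
      simp only [hj, hL, Fin.val_last]
      omega
    set g : Fin (r + 1) → EuclideanSpace ℂ (Fin (n + 1)) :=
      fun i => Fin.lastCases 0 g' i with hgdef
    have hgcast : ∀ i : Fin r, g i.castSucc = g' i := fun i => Fin.lastCases_castSucc ..
    have hglast : g L = 0 := Fin.lastCases_last ..
    have hgmem : ∀ i, g i ∈ V i := by
      intro i
      induction i using Fin.lastCases with
      | last => rw [hglast]; exact Submodule.zero_mem _
      | cast i => rw [hgcast]; exact hg'1 i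
    have hsum : ∑ i, g i = z := by
      rw [Fin.sum_univ_castSucc]
      simp only [hgcast, hg'2]
      rw [show g (Fin.last r) = 0 from hglast, add_zero]
    obtain ⟨k, hk⟩ : ∃ k, g k ≠ 0 := by
      by_contra hc
      push_neg at hc
      exact hz0 (by rw [← hsum]; simp [hc])
    have hbnd : ∀ t : ℝ, f (NormedSpace.exp ((t : ℂ) • β) z) ≤ c j := by
      intro t
      rw [← hsum, main g hgmem t]
      rw [div_le_iff₀ (hDpos g k hk t)]
      rw [Finset.mul_sum]
      refine Finset.sum_le_sum fun i _ => ?_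
      by_cases hi : i = L
      · subst hi
        rw [hglast]
        simp
      · have hij : c i ≤ c j := by
          refine hmono.monotone ?_
          have h1 : (i : ℕ) ≤ r := Fin.is_le i
          have h2 : (i : ℕ) ≠ r := by
            intro h
            exact hi (Fin.ext (by simp [hL, Fin.val_last, h]))
          rw [Fin.le_def]
          simp only [hj]
          omega
        have hnn : 0 ≤ (Real.exp (t * c i)) ^ 2 * ‖g i‖ ^ 2 := by positivity
        nlinarith
    have := le_of_tendsto htend (Filter.Eventually.of_forall hbnd)
    exact absurd this (not_le.mpr (hmono hjL))
  -- W is closed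
  have hWclosed : IsClosed (W : Set (EuclideanSpace ℂ (Fin (n + 1)))) :=
    Submodule.closed_of_finiteDimensional W
  -- existence of vector outside W
  obtain ⟨v, hvV, hv0⟩ := Submodule.exists_mem_ne_zero_of_ne_bot hVr
  have hvW : v ∉ W := by
    intro hvW
    obtain ⟨g', hg'1, hg'2⟩ := decompW v hvW
    have hvv : (inner ℂ v v : ℂ) = 0 := by
      have h1 : (inner ℂ v v : ℂ) = inner ℂ v (∑ i, g' i) := by rw [hg'2]
      rw [h1, inner_sum]
      refine Finset.sum_eq_zero fun i _ => ?_
      exact horth L i.castSucc (Ne.symm (Fin.ne_last_of_lt (Fin.castSucc_lt_last i)))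
        v hvV (g' i) (hg'1 i)
    exact hv0 (inner_self_eq_zero.mp hvv)
  refine ⟨?_, hWclosed.isOpen_compl, ?_⟩
  · ext z
    simp only [Set.mem_setOf_eq]
    constructor
    · rintro ⟨hz0, htend⟩
      refine ⟨hz0, fun hzW => hbound z hzW hz0 htend⟩
    · rintro ⟨hz0, hzW⟩
      refine ⟨hz0, ?_⟩
      obtain ⟨g, hg1, hg2⟩ := decomp z
      have hgL : g L ≠ 0 := by
        intro hgL
        apply hzW
        rw [← hg2, Fin.sum_univ_castSucc, hgL, add_zero, hW]
        exact Submodule.sum_mem _ fun i _ =>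
          Submodule.mem_iSup_of_mem i (hg1 i.castSucc)
      have := key g hg1 hgL
      rw [hg2] at this
      exact this
  · -- density
    intro x
    rw [mem_closure_iff_seq_limit]
    by_cases hxW : x ∈ W
    · refine ⟨fun k => x + (((((k : ℝ) + 1)⁻¹ : ℝ)) : ℂ) • v, fun k => ?_, ?_⟩
      · intro hmem
        have h1 : ((((k : ℝ) + 1)⁻¹ : ℝ) : ℂ) • v ∈ W := by
          have := W.sub_mem hmem hxW
          simpa using this
        have h2 : v ∈ W := by
          have := W.smul_mem (((((k : ℝ) + 1)⁻¹ : ℝ) : ℂ))⁻¹ h1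
          rwa [smul_smul, inv_mul_cancel₀ (by
            simp only [ne_eq, Complex.ofReal_eq_zero]
            positivity), one_smul] at this
        exact hvW h2
      · have h0 : Tendsto (fun k : ℕ => (((k : ℝ) + 1)⁻¹ : ℝ)) atTop (nhds 0) := by
          simpa using tendsto_one_div_add_atTop_nhds_zero_nat (𝕜 := ℝ)
        have h0c : Tendsto (fun k : ℕ => ((((k : ℝ) + 1)⁻¹ : ℝ) : ℂ)) atTop
            (nhds ((0 : ℝ) : ℂ)) :=
          (Complex.continuous_ofReal.tendsto 0).comp h0
        have hlim : Tendsto (fun k : ℕ => x + ((((k : ℝ) + 1)⁻¹ : ℝ) : ℂ) • v) atTop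
            (nhds (x + ((0 : ℝ) : ℂ) • v)) :=
          (tendsto_const_nhds (x := x)).add (h0c.smul_const v)
        simpa using hlim
    · exact ⟨fun _ => x, fun _ => hxW, tendsto_const_nhds⟩
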